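/- Let n ≥ 2 be an integer. The power series f₁(r) = −1 + Σ_{m=1}^∞ [m·(2m−2)! / (2^{3m−1}·(m!)²·∏_{j=0}^{m−1}(n+2j))]·r^{2m} converges for every real r, and the function f₁ satisfies f₁''(r) + ((n−1)/r − r/2)·f₁'(r) + (1/2)·f₁(r) = 0 for all r > 0. -/

import Mathlib

/-- The coefficient of `r^{2m}` (for `m ≥ 1`) in the radial Jacobi function `f₁` on the
self-shrinking hyperplane `ℝⁿ ⊂ ℝⁿ⁺¹`. -/
noncomputable def hplaneCoef (n m : ℕ) : ℝ :=
  ((m : ℝ) * (Nat.factorial (2*m - 2) : ℝ)) /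
    ((2:ℝ)^(3*m - 1) * ((Nat.factorial m : ℝ))^2 *
      ∏ j ∈ Finset.range m, ((n : ℝ) + 2*(j : ℝ)))

/-- `f₁(r) = −1 + Σ_{m≥1} a_{2m} r^{2m}`. -/
noncomputable def fOne (n : ℕ) (r : ℝ) : ℝ :=
  -1 + ∑' m : ℕ, hplaneCoef n (m+1) * r^(2*(m+1))

lemma prodPos (n m : ℕ) (hn : 2 ≤ n) :
    0 < ∏ j ∈ Finset.range m, ((n : ℝ) + 2*(j : ℝ)) := by
  apply Finset.prod_pos
  intro j _
  have : (2:ℝ) ≤ n := by exact_mod_cast hn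
  positivity

lemma prodLB (n m : ℕ) (hn : 2 ≤ n) :
    (2:ℝ)^m * (Nat.factorial m : ℝ) ≤ ∏ j ∈ Finset.range m, ((n : ℝ) + 2*(j : ℝ)) := by
  have h : (2:ℝ)^m * (Nat.factorial m : ℝ) = ∏ j ∈ Finset.range m, (2*((j:ℝ)+1)) := by
    induction m with
    | zero => simp
    | succ k ih =>
      rw [Finset.prod_range_succ, ← ih]
      push_cast [Nat.factorial_succ]
      ring
  rw [h]
  apply Finset.prod_le_prod
  · intro j _; positivity
  · intro j _
    have : (2:ℝ) ≤ n := by exact_mod_cast hn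
    linarith

lemma factLB (m : ℕ) : Nat.factorial (2*m) ≤ 4^m * (Nat.factorial m)^2 := by
  induction m with
  | zero => simp
  | succ k ih =>
    have h1 : 2*(k+1) = (2*k+1)+1 := by ring
    rw [h1, Nat.factorial_succ, Nat.factorial_succ]
    calc (2*k+1+1) * ((2*k+1) * Nat.factorial (2*k))
        ≤ (2*k+2) * ((2*k+2) * (4^k * (Nat.factorial k)^2)) := by
          apply Nat.mul_le_mul (by omega)
          exact Nat.mul_le_mul (by omega) ih
      _ = 4^(k+1) * ((k+1) * Nat.factorial k)^2 := by ring

lemma coefPos (n m : ℕ) (hn : 2 ≤ n) : 0 < hplaneCoef n (m+1) := by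
  unfold hplaneCoef
  have hp := prodPos n (m+1) hn
  have h1 : (0:ℝ) < (((m:ℕ)+1 : ℕ) : ℝ) := by positivity
  apply div_pos <;> positivity

lemma coefLE (n m : ℕ) (hn : 2 ≤ n) :
    hplaneCoef n (m+1) ≤ 1 / (Nat.factorial (m+1) : ℝ) := by
  unfold hplaneCoef
  rw [show 2*(m+1)-2 = 2*m from by omega, show 3*(m+1)-1 = 3*m+2 from by omega]
  have hp := prodPos n (m+1) hn
  have hplb := prodLB n (m+1) hn
  have hfpos : (0:ℝ) < (Nat.factorial (m+1) : ℝ) := by positivity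
  rw [div_le_div_iff₀ (by positivity) hfpos]
  have hnat : (m+1) * Nat.factorial (2*m) * Nat.factorial (m+1) ≤
      2^(3*m+2) * (Nat.factorial (m+1))^2 * (2^(m+1) * Nat.factorial (m+1)) := by
    calc (m+1) * Nat.factorial (2*m) * Nat.factorial (m+1)
        ≤ (m+1) * (4^m * (Nat.factorial m)^2) * Nat.factorial (m+1) := by
          exact Nat.mul_le_mul (Nat.mul_le_mul le_rfl (factLB m)) le_rfl
      _ = 4^m * (Nat.factorial (m+1)) * (Nat.factorial m * Nat.factorial (m+1)) := by
          rw [Nat.factorial_succ]; ring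
      _ ≤ 4^m * (Nat.factorial (m+1)) * (Nat.factorial (m+1) * Nat.factorial (m+1)) := by
          have := Nat.factorial_le (Nat.le_succ m)
          exact Nat.mul_le_mul le_rfl (Nat.mul_le_mul this le_rfl)
      _ ≤ 2^(4*m+3) * ((Nat.factorial (m+1))^3) := by
          have h4 : (4:ℕ)^m = 2^(2*m) := by rw [pow_mul]; norm_num
          rw [h4]
          have : (2:ℕ)^(2*m) ≤ 2^(4*m+3) := Nat.pow_le_pow_right (by norm_num) (by omega)
          calc 2^(2*m) * Nat.factorial (m+1) * (Nat.factorial (m+1) * Nat.factorial (m+1))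
              = 2^(2*m) * ((Nat.factorial (m+1))^3) := by ring
            _ ≤ 2^(4*m+3) * ((Nat.factorial (m+1))^3) := Nat.mul_le_mul this le_rfl
      _ = 2^(3*m+2) * (Nat.factorial (m+1))^2 * (2^(m+1) * Nat.factorial (m+1)) := by ring
  have hnatR : ((m:ℝ)+1) * (Nat.factorial (2*m) : ℝ) * (Nat.factorial (m+1) : ℝ) ≤
      (2:ℝ)^(3*m+2) * ((Nat.factorial (m+1) : ℝ))^2 * ((2:ℝ)^(m+1) * (Nat.factorial (m+1) : ℝ)) := by
    exact_mod_cast hnat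
  push_cast
  calc ((m:ℝ)+1) * (Nat.factorial (2*m) : ℝ) * (Nat.factorial (m+1) : ℝ)
      ≤ (2:ℝ)^(3*m+2) * ((Nat.factorial (m+1) : ℝ))^2 * ((2:ℝ)^(m+1) * (Nat.factorial (m+1) : ℝ)) := hnatR
    _ ≤ (2:ℝ)^(3*m+2) * ((Nat.factorial (m+1) : ℝ))^2 * (∏ j ∈ Finset.range (m+1), ((n : ℝ) + 2*(j : ℝ))) := by
        apply mul_le_mul_of_nonneg_left hplb (by positivity)
    _ = 1 * ((2:ℝ)^(3*m+2) * ((Nat.factorial (m+1) : ℝ))^2 * ∏ j ∈ Finset.range (m+1), ((n : ℝ) + 2*(j : ℝ))) := by ring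

lemma coefOne (n : ℕ) (hn : 2 ≤ n) : hplaneCoef n 1 = 1 / (4*(n:ℝ)) := by
  have hn0 : (0:ℝ) < n := by exact_mod_cast (by omega : 0 < n)
  unfold hplaneCoef
  norm_num [Nat.factorial]

lemma coefRec (n m : ℕ) (hn : 2 ≤ n) :
    hplaneCoef n (m+2) * ((2*(m:ℝ)+4) * (2*(m:ℝ)+2+(n:ℝ))) =
      hplaneCoef n (m+1) * ((2*(m:ℝ)+1)/2) := by
  have hp := prodPos n (m+1) hn
  have hnn : (0:ℝ) < (n:ℝ) + 2*((m:ℕ)+1 : ℕ) := by positivity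
  unfold hplaneCoef
  rw [show 2*(m+2)-2 = (2*m+1)+1 from by omega, show 3*(m+2)-1 = 3*m+5 from by omega,
      show 2*(m+1)-2 = 2*m from by omega, show 3*(m+1)-1 = 3*m+2 from by omega,
      show m+2 = (m+1)+1 from rfl, Finset.prod_range_succ,
      Nat.factorial_succ ((m+1)), Nat.factorial_succ (2*m+1), Nat.factorial_succ (2*m)]
  have hf : (0:ℝ) < (Nat.factorial (m+1) : ℝ) := by positivity
  have hne : ∏ j ∈ Finset.range (m+1), ((n : ℝ) + 2*(j : ℝ)) ≠ 0 := ne_of_gt hp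
  have hne2 : ((n : ℝ) + 2*(((m+1) : ℕ) : ℝ)) ≠ 0 := by push_cast; push_cast at hnn; linarith
  field_simp
  push_cast
  ring

/-- The series defining `f₁` converges for every real `r`, and `f₁` satisfies
`f₁'' + ((n−1)/r − r/2)f₁' + (1/2)f₁ = 0` for all `r > 0`. -/
theorem stmt12 (n : ℕ) (hn : 2 ≤ n) :
    (∀ r : ℝ, Summable fun m : ℕ => hplaneCoef n (m+1) * r^(2*(m+1))) ∧
    (∀ r : ℝ, 0 < r →
      deriv (deriv (fOne n)) r + (((n : ℝ) - 1)/r - r/2) * deriv (fOne n) r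
        + (1/2) * fOne n r = 0) := by
  have hnR : (2:ℝ) ≤ n := by exact_mod_cast hn
  set a : ℕ → ℝ := fun m => hplaneCoef n (m+1) with ha
  have hapos : ∀ m, 0 < a m := fun m => coefPos n m hn
  have hale : ∀ m, a m ≤ 1/(Nat.factorial (m+1) : ℝ) := fun m => coefLE n m hn
  have key1 : ∀ m : ℕ, a m * (2*(m:ℝ)+2) ≤ 2/(Nat.factorial m : ℝ) := by
    intro m
    have hf : (Nat.factorial (m+1) : ℝ) = ((m:ℝ)+1) * Nat.factorial m := by
      rw [Nat.factorial_succ]; push_cast; ring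
    have hfm : (0:ℝ) < (Nat.factorial m : ℝ) := by positivity
    calc a m * (2*(m:ℝ)+2) ≤ 1/(Nat.factorial (m+1) : ℝ) * (2*(m:ℝ)+2) :=
          mul_le_mul_of_nonneg_right (hale m) (by positivity)
      _ = 2/(Nat.factorial m : ℝ) := by
          rw [hf]
          have h1 : ((m:ℝ)+1) ≠ 0 := by positivity
          field_simp
  have keyexp : ∀ m : ℕ, (2*(m:ℝ)+1) ≤ 3 * 2^m := by
    intro m
    have h1 : m + 1 ≤ 2^m := Nat.lt_two_pow_self (n := m)
    have h2 : (m:ℝ) + 1 ≤ 2^m := by exact_mod_cast h1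
    have h3 : (1:ℝ) ≤ 2^m := one_le_pow₀ (by norm_num)
    linarith
  -- Summability of the three series
  have hsum0 : ∀ x : ℝ, Summable (fun m : ℕ => a m * x^(2*(m+1))) := by
    intro x
    apply Summable.of_norm_bounded (g := fun m => (x^2)^(m+1)/(Nat.factorial (m+1) : ℝ))
      ((summable_nat_add_iff 1).2 (Real.summable_pow_div_factorial (x^2)))
    intro m
    have hx : ‖x^(2*(m+1))‖ = (x^2)^(m+1) := by
      rw [pow_mul, Real.norm_eq_abs, abs_pow, abs_of_nonneg (sq_nonneg x)]
    rw [norm_mul, hx, Real.norm_eq_abs, abs_of_pos (hapos m)]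
    calc a m * (x^2)^(m+1) ≤ (1/(Nat.factorial (m+1) : ℝ)) * (x^2)^(m+1) :=
          mul_le_mul_of_nonneg_right (hale m) (by positivity)
      _ = (x^2)^(m+1)/(Nat.factorial (m+1) : ℝ) := by ring
  have hsum1 : ∀ x : ℝ, 0 ≤ x → Summable (fun m : ℕ => a m * (2*(m:ℝ)+2) * x^(2*m+1)) := by
    intro x hx
    apply Summable.of_nonneg_of_le
      (fun m => mul_nonneg (mul_nonneg (hapos m).le (by positivity)) (pow_nonneg hx _))
      (fun m => ?_)
      ((Real.summable_pow_div_factorial (x^2)).mul_left (2*x))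
    have hxp : x^(2*m+1) = x * (x^2)^m := by rw [pow_succ, pow_mul]; ring
    calc a m * (2*(m:ℝ)+2) * x^(2*m+1)
        ≤ (2/(Nat.factorial m : ℝ)) * x^(2*m+1) :=
          mul_le_mul_of_nonneg_right (key1 m) (pow_nonneg hx _)
      _ = 2*x * ((x^2)^m / (Nat.factorial m : ℝ)) := by rw [hxp]; ring
  have hsum2 : ∀ x : ℝ, 0 ≤ x →
      Summable (fun m : ℕ => a m * ((2*(m:ℝ)+2)*(2*(m:ℝ)+1)) * x^(2*m)) := by
    intro x hx
    apply Summable.of_nonneg_of_le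
      (fun m => mul_nonneg (mul_nonneg (hapos m).le (by positivity)) (pow_nonneg hx _))
      (fun m => ?_)
      ((Real.summable_pow_div_factorial (2*x^2)).mul_left 6)
    have hxp : x^(2*m) = (x^2)^m := by rw [pow_mul]
    have hfm : (0:ℝ) < (Nat.factorial m : ℝ) := by positivity
    calc a m * ((2*(m:ℝ)+2)*(2*(m:ℝ)+1)) * x^(2*m)
        = (a m * (2*(m:ℝ)+2)) * (2*(m:ℝ)+1) * x^(2*m) := by ring
      _ ≤ (2/(Nat.factorial m : ℝ)) * (3*2^m) * x^(2*m) := by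
          apply mul_le_mul_of_nonneg_right _ (pow_nonneg hx _)
          apply mul_le_mul (key1 m) (keyexp m) (by positivity) (by positivity)
      _ = 6 * ((2*x^2)^m / (Nat.factorial m : ℝ)) := by
          rw [hxp, mul_pow]; ring
  refine ⟨fun r => hsum0 r, ?_⟩
  intro r hr
  set R : ℝ := r + 1 with hR
  have hRpos : (0:ℝ) < R := by positivity
  set t : Set ℝ := Metric.ball (0:ℝ) R with ht
  have htO : IsOpen t := Metric.isOpen_ball
  have htC : IsPreconnected t := (convex_ball (0:ℝ) R).isPreconnected
  have hrt : r ∈ t := by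
    simp only [ht, Metric.mem_ball, Real.dist_eq, sub_zero]
    rw [abs_of_pos hr]; linarith
  have hmem : ∀ y ∈ t, |y| ≤ R := by
    intro y hy
    have : |y| < R := by simpa [ht, Metric.mem_ball, Real.dist_eq] using hy
    linarith
  -- derivative facts for individual terms
  have hg : ∀ (m : ℕ), ∀ y ∈ t, HasDerivAt (fun z => a m * z^(2*(m+1)))
      (a m * (2*(m:ℝ)+2) * y^(2*m+1)) y := by
    intro m y _
    have h := (hasDerivAt_pow (2*(m+1)) y).const_mul (a m)
    convert h using 1
    · rfl
    · rfl
    rw [show 2*(m+1)-1 = 2*m+1 from by omega]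
    push_cast
    ring
  have hg1 : ∀ (m : ℕ), ∀ y ∈ t, HasDerivAt (fun z => a m * (2*(m:ℝ)+2) * z^(2*m+1))
      (a m * ((2*(m:ℝ)+2)*(2*(m:ℝ)+1)) * y^(2*m)) y := by
    intro m y _
    have h := (hasDerivAt_pow (2*m+1) y).const_mul (a m * (2*(m:ℝ)+2))
    convert h using 1
    · rfl
    · rfl
    rw [show 2*m+1-1 = 2*m from by omega]
    push_cast
    ring
  -- uniform bounds on t
  have hb1 : ∀ (m : ℕ), ∀ y ∈ t, ‖a m * (2*(m:ℝ)+2) * y^(2*m+1)‖ ≤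
      a m * (2*(m:ℝ)+2) * R^(2*m+1) := by
    intro m y hy
    rw [norm_mul, Real.norm_eq_abs, Real.norm_eq_abs,
      abs_of_pos (mul_pos (hapos m) (by positivity)), abs_pow]
    exact mul_le_mul_of_nonneg_left
      (pow_le_pow_left₀ (abs_nonneg y) (hmem y hy) _)
      (mul_pos (hapos m) (by positivity)).le
  have hb2 : ∀ (m : ℕ), ∀ y ∈ t, ‖a m * ((2*(m:ℝ)+2)*(2*(m:ℝ)+1)) * y^(2*m)‖ ≤
      a m * ((2*(m:ℝ)+2)*(2*(m:ℝ)+1)) * R^(2*m) := by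
    intro m y hy
    rw [norm_mul, Real.norm_eq_abs, Real.norm_eq_abs,
      abs_of_pos (mul_pos (hapos m) (by positivity)), abs_pow]
    exact mul_le_mul_of_nonneg_left
      (pow_le_pow_left₀ (abs_nonneg y) (hmem y hy) _)
      (mul_pos (hapos m) (by positivity)).le
  have hu1 : Summable (fun m : ℕ => a m * (2*(m:ℝ)+2) * R^(2*m+1)) := hsum1 R hRpos.le
  have hu2 : Summable (fun m : ℕ => a m * ((2*(m:ℝ)+2)*(2*(m:ℝ)+1)) * R^(2*m)) :=
    hsum2 R hRpos.le
  -- first and second derivative identification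
  have hFder : ∀ y ∈ t, HasDerivAt (fOne n)
      (∑' m : ℕ, a m * (2*(m:ℝ)+2) * y^(2*m+1)) y := by
    intro y hy
    have h := hasDerivAt_tsum_of_isPreconnected hu1 htO htC hg hb1 hrt (hsum0 r) hy
    have hfe : fOne n = fun z => -1 + ∑' m : ℕ, a m * z^(2*(m+1)) := by
      funext z; simp [fOne, ha]
    rw [hfe]
    exact h.const_add (-1)
  have hD1der : HasDerivAt (fun y => ∑' m : ℕ, a m * (2*(m:ℝ)+2) * y^(2*m+1))
      (∑' m : ℕ, a m * ((2*(m:ℝ)+2)*(2*(m:ℝ)+1)) * r^(2*m)) r := by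
    refine hasDerivAt_tsum_of_isPreconnected hu2 htO htC hg1 hb2 hrt ?_ hrt
    exact Summable.of_norm_bounded hu1 (fun m => hb1 m r hrt)
  have hd1 : deriv (fOne n) r = ∑' m : ℕ, a m * (2*(m:ℝ)+2) * r^(2*m+1) :=
    (hFder r hrt).deriv
  have heq : deriv (fOne n) =ᶠ[nhds r] fun y => ∑' m : ℕ, a m * (2*(m:ℝ)+2) * y^(2*m+1) := by
    filter_upwards [htO.mem_nhds hrt] with y hy
    exact (hFder y hy).deriv
  have hd2 : deriv (deriv (fOne n)) r =
      ∑' m : ℕ, a m * ((2*(m:ℝ)+2)*(2*(m:ℝ)+1)) * r^(2*m) := by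
    rw [heq.deriv_eq]
    exact hD1der.deriv
  rw [hd1, hd2]
  -- pure algebra with tsums
  have hrne : r ≠ 0 := ne_of_gt hr
  have hsum1r : Summable (fun m : ℕ => a m * (2*(m:ℝ)+2) * r^(2*m+1)) := hsum1 r hr.le
  have hsum2r : Summable (fun m : ℕ => a m * ((2*(m:ℝ)+2)*(2*(m:ℝ)+1)) * r^(2*m)) :=
    hsum2 r hr.le
  have hS1c : (((n:ℝ)-1)/r) * (∑' m : ℕ, a m * (2*(m:ℝ)+2) * r^(2*m+1)) =
      ∑' m : ℕ, a m * ((2*(m:ℝ)+2)*((n:ℝ)-1)) * r^(2*m) := by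
    rw [← tsum_mul_left]
    apply tsum_congr
    intro m
    rw [pow_succ]
    field_simp
  have hsumS1c : Summable (fun m : ℕ => a m * ((2*(m:ℝ)+2)*((n:ℝ)-1)) * r^(2*m)) := by
    apply (hsum1r.mul_left (((n:ℝ)-1)/r)).congr
    intro m
    rw [pow_succ]
    field_simp
  have hfr : fOne n r = -1 + ∑' m : ℕ, a m * r^(2*(m+1)) := by simp [fOne, ha]
  have h2 : (∑' m : ℕ, a m * ((2*(m:ℝ)+2)*(2*(m:ℝ)+1)) * r^(2*m)) +
      (((n:ℝ)-1)/r) * (∑' m : ℕ, a m * (2*(m:ℝ)+2) * r^(2*m+1)) =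
      ∑' m : ℕ, a m * ((2*(m:ℝ)+2)*(2*(m:ℝ)+(n:ℝ))) * r^(2*m) := by
    rw [hS1c, ← Summable.tsum_add hsum2r hsumS1c]
    apply tsum_congr
    intro m
    ring
  have h3 : (r/2) * (∑' m : ℕ, a m * (2*(m:ℝ)+2) * r^(2*m+1)) -
      (1/2) * (∑' m : ℕ, a m * r^(2*(m+1))) =
      ∑' m : ℕ, a m * ((2*(m:ℝ)+1)/2) * r^(2*m+2) := by
    rw [← tsum_mul_left, ← tsum_mul_left,
      ← Summable.tsum_sub (hsum1r.mul_left (r/2)) ((hsum0 r).mul_left (1/2))]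
    apply tsum_congr
    intro m
    rw [show 2*(m+1) = 2*m+1+1 from by ring, pow_succ]
    ring
  have hTsum : Summable (fun m : ℕ => a m * ((2*(m:ℝ)+2)*(2*(m:ℝ)+(n:ℝ))) * r^(2*m)) := by
    apply (hsum2r.add hsumS1c).congr
    intro m
    ring
  have hT0 : a 0 * ((2*(0:ℝ)+2)*(2*(0:ℝ)+(n:ℝ))) * r^(2*0) = 1/2 := by
    have h0 : a 0 = 1/(4*(n:ℝ)) := coefOne n hn
    have hn0 : (n:ℝ) ≠ 0 := by positivity
    rw [h0]
    field_simp
    ring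
  have hTU : ∀ m : ℕ, a (m+1) * ((2*((m:ℝ)+1)+2)*(2*((m:ℝ)+1)+(n:ℝ))) * r^(2*(m+1)) =
      a m * ((2*(m:ℝ)+1)/2) * r^(2*m+2) := by
    intro m
    have h := coefRec n m hn
    rw [show 2*(m+1) = 2*m+2 from by ring]
    have haa : a (m+1) = hplaneCoef n (m+2) := rfl
    have hab : a m = hplaneCoef n (m+1) := rfl
    rw [haa, hab]
    linear_combination (r^(2*m+2)) * h
  have h5 : (∑' m : ℕ, a m * ((2*(m:ℝ)+2)*(2*(m:ℝ)+(n:ℝ))) * r^(2*m)) =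
      1/2 + ∑' m : ℕ, a m * ((2*(m:ℝ)+1)/2) * r^(2*m+2) := by
    rw [Summable.tsum_eq_zero_add hTsum]
    push_cast
    rw [hT0]
    congr 1
    apply tsum_congr
    intro m
    push_cast
    exact hTU m
  rw [hfr]
  linear_combination h2 - h3 + h5
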